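/- Let P be a finite projective plane of order q, let P₀ be a point and let L be a set of lines such that every point other than P₀ lies on some line of L and P₀ lies on no line of L. If some point R ≠ P₀ lies on exactly q lines of L, then |L| ≥ 2q − 1. -/

import Mathlib

open Finset

theorem stmt7 {P L : Type*} [Membership P L] [Configuration.ProjectivePlane P L]
    [Fintype P] [Fintype L] [∀ (p : P) (l : L), Decidable (p ∈ l)]
    (q : ℕ) (hq : Configuration.ProjectivePlane.order P L = q)
    (P₀ : P) (ℒ : Finset L)
    (hcov : ∀ p : P, p ≠ P₀ → ∃ l ∈ ℒ, p ∈ l)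
    (hP₀ : ∀ l ∈ ℒ, P₀ ∉ l)
    (R : P) (hR : R ≠ P₀) (hRq : ({l ∈ ℒ | R ∈ l}).card = q) :
    2 * q - 1 ≤ ℒ.card := by
  classical
  set m : L := Configuration.HasLines.mkLine hR with hm
  have hRm : R ∈ m := (Configuration.HasLines.mkLine_ax hR).1
  have hP₀m : P₀ ∈ m := (Configuration.HasLines.mkLine_ax hR).2
  set S : Finset P := (univ.filter (· ∈ m)) \ {R, P₀} with hS
  have hmcard : (univ.filter (· ∈ m)).card = q + 1 := by
    have h := Configuration.ProjectivePlane.pointCount_eq P m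
    rw [hq] at h
    rwa [Configuration.pointCount, Nat.card_eq_fintype_card, Fintype.card_subtype] at h
  have hScard : S.card = q - 1 := by
    rw [hS, Finset.card_sdiff_of_subset]
    · rw [hmcard]
      rw [Finset.card_insert_of_notMem (by simpa using hR), Finset.card_singleton]
      omega
    · intro x hx
      simp only [Finset.mem_insert, Finset.mem_singleton] at hx
      rcases hx with rfl | rfl <;> simp [hRm, hP₀m]
  let f : P → L := fun p => if h : p ≠ P₀ then Classical.choose (hcov p h) else m
  have hf : ∀ p ∈ S, f p ∈ ℒ ∧ p ∈ f p ∧ f p ≠ m := by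
    intro p hp
    simp only [hS, Finset.mem_sdiff, Finset.mem_filter, Finset.mem_insert,
      Finset.mem_singleton, not_or] at hp
    obtain ⟨⟨-, hpm⟩, hpR, hpP₀⟩ := hp
    have hfl : f p = Classical.choose (hcov p hpP₀) := dif_pos hpP₀
    obtain ⟨h1, h2⟩ := Classical.choose_spec (hcov p hpP₀)
    refine ⟨hfl ▸ h1, hfl ▸ h2, ?_⟩
    intro h
    exact hP₀ (f p) (hfl ▸ h1) (h ▸ hP₀m)
  have hmem : ∀ p ∈ S, f p ∈ ℒ.filter (fun l => R ∉ l) := by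
    intro p hp
    obtain ⟨h1, h2, h3⟩ := hf p hp
    simp only [hS, Finset.mem_sdiff, Finset.mem_filter, Finset.mem_insert,
      Finset.mem_singleton, not_or] at hp
    obtain ⟨⟨-, hpm⟩, hpR, hpP₀⟩ := hp
    rw [Finset.mem_filter]
    refine ⟨h1, fun hRf => ?_⟩
    rcases Configuration.Nondegenerate.eq_or_eq hRm hpm hRf h2 with h | h
    · exact hpR h.symm
    · exact h3 h.symm
  have hinj : Set.InjOn f S := by
    intro p hp p' hp' hpp'
    obtain ⟨-, h2, h3⟩ := hf p hp
    obtain ⟨-, h2', -⟩ := hf p' hp'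
    simp only [hS, Finset.coe_sdiff, Set.mem_diff, Finset.coe_filter, Set.mem_setOf_eq,
      Finset.coe_insert, Finset.coe_singleton, Set.mem_insert_iff,
      Set.mem_singleton_iff, not_or, Finset.mem_univ, true_and] at hp hp'
    rcases Configuration.Nondegenerate.eq_or_eq hp.1 hp'.1 h2 (hpp' ▸ h2') with h | h
    · exact h
    · exact absurd h.symm h3
  have hcard2 : q - 1 ≤ (ℒ.filter (fun l => R ∉ l)).card := by
    rw [← hScard]
    exact Finset.card_le_card_of_injOn f hmem hinj
  have hsplit := Finset.card_filter_add_card_filter_not (s := ℒ)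
    (p := fun l => R ∈ l)
  omega
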